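/- arXiv:2210.14646 — 4 statements merged into one kernel-verified Lean document; each statement's English description precedes it below -/
import Mathlib

section
/- Let n ≥ 1, let Λ be an n×n real symmetric positive definite matrix with smallest eigenvalue λ_min > 0 and largest eigenvalue λ_max, and let r > 0. Define sat : ℝⁿ → ℝⁿ by sat(x) = (tanh(‖x‖)/‖x‖)·x for x ≠ 0 and sat(0) = 0, where ‖·‖ is the Euclidean norm. Then for every x ∈ ℝⁿ with ‖x‖ ≤ r, the inner product satisfies ⟪x, sat(Λx)⟫ ≥ λ_min · (tanh(λ_max r)/(λ_max r)) · ‖x‖². -/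
open scoped RealInnerProductSpace Classical

/-- The smooth saturation function `sat(x) = (tanh ‖x‖ / ‖x‖) · x` (with `sat 0 = 0`). -/
noncomputable def sat {n : ℕ} (x : EuclideanSpace ℝ (Fin n)) : EuclideanSpace ℝ (Fin n) :=
  if x = 0 then 0 else (Real.tanh ‖x‖ / ‖x‖) • x

section aux

variable {n : ℕ}


lemma hasDerivAt_tanh' (t : ℝ) : HasDerivAt Real.tanh (1 / (Real.cosh t)^2) t := by
  have h := (Real.hasDerivAt_sinh t).div (Real.hasDerivAt_cosh t) (ne_of_gt (Real.cosh_pos t))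
  have : (Real.cosh t * Real.cosh t - Real.sinh t * Real.sinh t) / Real.cosh t ^ 2
      = 1 / Real.cosh t ^ 2 := by
    rw [show Real.cosh t * Real.cosh t - Real.sinh t * Real.sinh t
        = Real.cosh t ^ 2 - Real.sinh t ^ 2 by ring, Real.cosh_sq_sub_sinh_sq]
  rw [this] at h
  have e : Real.tanh = fun x => Real.sinh x / Real.cosh x := funext Real.tanh_eq_sinh_div_cosh
  rw [e]; exact h

lemma tanh_div_antitone {a b : ℝ} (ha : 0 < a) (hab : a ≤ b) :
    Real.tanh b / b ≤ Real.tanh a / a := by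
  have H : AntitoneOn (fun t => Real.tanh t / t) (Set.Icc a b) := by
    have hdiff : ∀ t ∈ Set.Icc a b, HasDerivAt (fun t => Real.tanh t / t)
        ((1 / (Real.cosh t)^2 * t - Real.tanh t * 1) / t ^ 2) t := by
      intro t ht
      exact (hasDerivAt_tanh' t).div (hasDerivAt_id t) (ne_of_gt (lt_of_lt_of_le ha ht.1))
    apply antitoneOn_of_deriv_nonpos (convex_Icc a b)
    · exact fun t ht => ((hdiff t ht).continuousAt).continuousWithinAt
    · intro t ht
      rw [interior_Icc] at ht
      exact ((hdiff t (Set.mem_Icc.mpr ⟨le_of_lt ht.1, le_of_lt ht.2⟩)).differentiableAt).differentiableWithinAt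
    · intro t ht
      rw [interior_Icc] at ht
      have ht0 : 0 < t := lt_of_lt_of_le ha (le_of_lt ht.1)
      have hd : HasDerivAt (fun t => Real.tanh t / t)
          ((1 / (Real.cosh t)^2 * t - Real.tanh t * 1) / t ^ 2) t :=
        (hasDerivAt_tanh' t).div (hasDerivAt_id t) (ne_of_gt ht0)
      rw [hd.deriv]
      apply div_nonpos_of_nonpos_of_nonneg _ (sq_nonneg t)
      have hkey : t ≤ Real.sinh t * Real.cosh t := by
        calc t ≤ Real.sinh t := le_of_lt (Real.self_lt_sinh_iff.mpr ht0)
        _ = Real.sinh t * 1 := by ring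
        _ ≤ Real.sinh t * Real.cosh t := by
            apply mul_le_mul_of_nonneg_left (Real.one_le_cosh t)
            exact le_of_lt (Real.sinh_pos_iff.mpr ht0)
      have hc : (0:ℝ) < Real.cosh t ^ 2 := by positivity
      have : t / Real.cosh t ^ 2 ≤ Real.tanh t := by
        rw [div_le_iff₀ hc, Real.tanh_eq_sinh_div_cosh, div_mul_eq_mul_div, le_div_iff₀ (Real.cosh_pos t)]
        calc t * Real.cosh t ≤ Real.sinh t * Real.cosh t * Real.cosh t := by
              nlinarith [Real.cosh_pos t]
        _ = Real.sinh t * Real.cosh t ^ 2 := by ring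
      have e2 : 1 / Real.cosh t ^ 2 * t - Real.tanh t * 1 = t / Real.cosh t ^ 2 - Real.tanh t := by
        field_simp
      rw [e2]; linarith
  exact H ⟨le_refl a, hab⟩ ⟨hab, le_refl b⟩ hab

lemma tanh_div_pos {a : ℝ} (ha : 0 < a) : 0 < Real.tanh a / a := by
  apply div_pos _ ha
  rw [Real.tanh_eq_sinh_div_cosh]
  exact div_pos (Real.sinh_pos_iff.mpr ha) (Real.cosh_pos a)


variable {n : ℕ}

private lemma eig_inner' (Λ : Matrix (Fin n) (Fin n) ℝ) (hΛ : Λ.IsHermitian)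
    (x : EuclideanSpace ℝ (Fin n)) (i : Fin n) :
    ⟪(hΛ.eigenvectorBasis i : EuclideanSpace ℝ (Fin n)),
      (WithLp.toLp 2 (Λ.mulVec x) : EuclideanSpace ℝ (Fin n))⟫
      = hΛ.eigenvalues i * ⟪(hΛ.eigenvectorBasis i : EuclideanSpace ℝ (Fin n)), x⟫ := by
  have hsym : (Matrix.toEuclideanLin Λ).IsSymmetric :=
    Matrix.isHermitian_iff_isSymmetric.mp hΛ
  have hme : Matrix.toEuclideanLin Λ x = (WithLp.toLp 2 (Λ.mulVec x) : EuclideanSpace ℝ (Fin n)) := rfl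
  have hb : Matrix.toEuclideanLin Λ (hΛ.eigenvectorBasis i)
      = hΛ.eigenvalues i • (hΛ.eigenvectorBasis i : EuclideanSpace ℝ (Fin n)) :=
    congrArg (WithLp.toLp 2) (hΛ.mulVec_eigenvectorBasis i)
  calc ⟪(hΛ.eigenvectorBasis i : EuclideanSpace ℝ (Fin n)), (WithLp.toLp 2 (Λ.mulVec x) : EuclideanSpace ℝ (Fin n))⟫
      = ⟪(hΛ.eigenvectorBasis i : EuclideanSpace ℝ (Fin n)), Matrix.toEuclideanLin Λ x⟫ := by rw [hme]
    _ = ⟪Matrix.toEuclideanLin Λ (hΛ.eigenvectorBasis i), x⟫ := (hsym _ _).symm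
    _ = hΛ.eigenvalues i * ⟪(hΛ.eigenvectorBasis i : EuclideanSpace ℝ (Fin n)), x⟫ := by
        rw [hb]; exact real_inner_smul_left _ _ _

private lemma quad_lower (Λ : Matrix (Fin n) (Fin n) ℝ) (hΛ : Λ.IsHermitian)
    (lmin : ℝ) (hmin : ∀ i, lmin ≤ hΛ.eigenvalues i) (x : EuclideanSpace ℝ (Fin n)) :
    lmin * ‖x‖ ^ 2 ≤ ⟪x, (WithLp.toLp 2 (Λ.mulVec x) : EuclideanSpace ℝ (Fin n))⟫ := by
  set b := hΛ.eigenvectorBasis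
  have hx2 : ∑ i, ⟪x, (b i : EuclideanSpace ℝ (Fin n))⟫ ^ 2 = ‖x‖ ^ 2 := by
    have := b.sum_inner_mul_inner x x
    simp only [real_inner_comm x] at this ⊢
    rw [← real_inner_self_eq_norm_sq x, ← this]
    congr 1; funext i; ring_nf
  have hexp : ⟪x, (WithLp.toLp 2 (Λ.mulVec x) : EuclideanSpace ℝ (Fin n))⟫
      = ∑ i, hΛ.eigenvalues i * ⟪x, (b i : EuclideanSpace ℝ (Fin n))⟫ ^ 2 := by
    rw [← b.sum_inner_mul_inner x]
    congr 1; funext i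
    rw [eig_inner' Λ hΛ x i, real_inner_comm x]; ring
  rw [hexp, ← hx2, Finset.mul_sum]
  apply Finset.sum_le_sum
  intro i _
  exact mul_le_mul_of_nonneg_right (hmin i) (sq_nonneg _)

private lemma norm_mulVec_le (Λ : Matrix (Fin n) (Fin n) ℝ) (hΛ : Λ.IsHermitian)
    (lmax : ℝ) (hlmax0 : 0 ≤ lmax) (hmax : ∀ i, |hΛ.eigenvalues i| ≤ lmax)
    (x y : EuclideanSpace ℝ (Fin n)) (hyd : y = (WithLp.toLp 2 (Λ.mulVec x) : EuclideanSpace ℝ (Fin n))) :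
    ‖y‖ ≤ lmax * ‖x‖ := by
  set b := hΛ.eigenvectorBasis with hb
  have hy : ∀ i, ⟪(b i : EuclideanSpace ℝ (Fin n)), y⟫
      = hΛ.eigenvalues i * ⟪(b i : EuclideanSpace ℝ (Fin n)), x⟫ := by
    intro i; rw [hyd]; exact eig_inner' Λ hΛ x i
  have hx2 : ∑ i, ⟪(b i : EuclideanSpace ℝ (Fin n)), x⟫ ^ 2 = ‖x‖ ^ 2 := by
    have := b.sum_inner_mul_inner x x
    rw [← real_inner_self_eq_norm_sq x, ← this]
    congr 1; funext i
    rw [real_inner_comm x]; ring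
  have hy2 : ‖y‖ ^ 2
      = ∑ i, (hΛ.eigenvalues i * ⟪(b i : EuclideanSpace ℝ (Fin n)), x⟫) ^ 2 := by
    rw [← real_inner_self_eq_norm_sq, ← b.sum_inner_mul_inner]
    refine Finset.sum_congr rfl fun i _ => ?_
    have h := hy i
    rw [real_inner_comm] at h
    rw [h, hy i]; ring
  have hle : ‖y‖ ^ 2 ≤ (lmax * ‖x‖) ^ 2 := by
    rw [hy2, mul_pow, ← hx2, Finset.mul_sum]
    apply Finset.sum_le_sum
    intro i _
    rw [mul_pow]
    apply mul_le_mul_of_nonneg_right _ (sq_nonneg _)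
    rw [← sq_abs]
    exact pow_le_pow_left₀ (abs_nonneg _) (hmax i) 2
  exact le_of_pow_le_pow_left₀ two_ne_zero (mul_nonneg hlmax0 (norm_nonneg x)) hle

end aux

/-- **Lower bound on the saturated formation-keeping term.**
If `Λ` is symmetric positive definite with smallest eigenvalue `λmin > 0` and largest
eigenvalue `λmax`, then for `‖x‖ ≤ r`,
`⟪x, sat (Λ x)⟫ ≥ λmin · tanh(λmax r)/(λmax r) · ‖x‖²`. -/
theorem inner_sat_lower_bound (n : ℕ) (hn : 1 ≤ n)
    (Λ : Matrix (Fin n) (Fin n) ℝ) (hΛ : Λ.IsHermitian) (hPD : Λ.PosDef)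
    (lmin lmax : ℝ)
    (hmin : IsLeast (Set.range hΛ.eigenvalues) lmin)
    (hmax : IsGreatest (Set.range hΛ.eigenvalues) lmax)
    (hlmin : 0 < lmin)
    (r : ℝ) (hr : 0 < r)
    (x : EuclideanSpace ℝ (Fin n)) (hx : ‖x‖ ≤ r) :
    ⟪x, sat (WithLp.toLp 2 (Λ.mulVec x) : EuclideanSpace ℝ (Fin n))⟫ ≥
      lmin * (Real.tanh (lmax * r) / (lmax * r)) * ‖x‖ ^ 2 := by
  have hminall : ∀ i, lmin ≤ hΛ.eigenvalues i := fun i => hmin.2 ⟨i, rfl⟩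
  have hmaxall : ∀ i, hΛ.eigenvalues i ≤ lmax := fun i => hmax.2 ⟨i, rfl⟩
  have hminmax : lmin ≤ lmax := hmin.2 hmax.1
  have hlmax : 0 < lmax := lt_of_lt_of_le hlmin hminmax
  have hCpos : 0 < Real.tanh (lmax * r) / (lmax * r) := tanh_div_pos (mul_pos hlmax hr)
  by_cases hx0 : x = 0
  · subst hx0
    simp only [norm_zero]
    rw [show ((0 : EuclideanSpace ℝ (Fin n)) : EuclideanSpace ℝ (Fin n)) = 0 from rfl]
    have : (WithLp.toLp 2 (Λ.mulVec (0 : EuclideanSpace ℝ (Fin n))) : EuclideanSpace ℝ (Fin n)) = 0 := by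
      show (WithLp.toLp 2 (Λ.mulVec 0) : EuclideanSpace ℝ (Fin n)) = 0
      rw [Matrix.mulVec_zero Λ]; rfl
    rw [this]
    simp [sat]
  obtain ⟨y, hyd⟩ : ∃ y : EuclideanSpace ℝ (Fin n),
      y = (WithLp.toLp 2 (Λ.mulVec x) : EuclideanSpace ℝ (Fin n)) := ⟨_, rfl⟩
  rw [← hyd]
  have habs : ∀ i, |hΛ.eigenvalues i| ≤ lmax := fun i =>
    abs_le.mpr ⟨by linarith [hminall i], hmaxall i⟩
  have hquad : lmin * ‖x‖ ^ 2 ≤ ⟪x, y⟫ := by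
    rw [hyd]; exact quad_lower Λ hΛ lmin hminall x
  have hxpos : 0 < ‖x‖ := norm_pos_iff.mpr hx0
  have hinner_pos : 0 < ⟪x, y⟫ :=
    lt_of_lt_of_le (by positivity) hquad
  have hy0 : y ≠ 0 := by
    intro h
    rw [h, inner_zero_right] at hinner_pos
    exact lt_irrefl 0 hinner_pos
  have hyn : 0 < ‖y‖ := norm_pos_iff.mpr hy0
  have hyle : ‖y‖ ≤ lmax * r := by
    calc ‖y‖ ≤ lmax * ‖x‖ := norm_mulVec_le Λ hΛ lmax (le_of_lt hlmax) habs x y hyd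
    _ ≤ lmax * r := mul_le_mul_of_nonneg_left hx (le_of_lt hlmax)
  have hC : Real.tanh (lmax * r) / (lmax * r) ≤ Real.tanh ‖y‖ / ‖y‖ :=
    tanh_div_antitone hyn hyle
  have hsat : sat y = (Real.tanh ‖y‖ / ‖y‖) • y := by
    rw [sat, if_neg hy0]
  rw [hsat, real_inner_smul_right]
  calc lmin * (Real.tanh (lmax * r) / (lmax * r)) * ‖x‖ ^ 2
      = (Real.tanh (lmax * r) / (lmax * r)) * (lmin * ‖x‖ ^ 2) := by ring
    _ ≤ (Real.tanh (lmax * r) / (lmax * r)) * ⟪x, y⟫ :=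
        mul_le_mul_of_nonneg_left hquad (le_of_lt hCpos)
    _ ≤ (Real.tanh ‖y‖ / ‖y‖) * ⟪x, y⟫ :=
        mul_le_mul_of_nonneg_right hC (le_of_lt hinner_pos)
end

section
/- Let Δ₀ > 0, k_ξ > 0, and r > 0 be real constants, and let x, y, z ∈ ℝ satisfy x² + y² + z² ≤ r². Set Δ = √(Δ₀² + x² + y² + z²) and D = √(Δ² + y² + z²). Then k_ξ · x²/√(1 + x²) + y²/D + z²/D ≥ min{k_ξ/√(1 + r²), 1/√(Δ₀² + 2r²)} · (x² + y² + z²). -/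
/-- **Quadratic lower bound for the path-following part of the Lyapunov derivative.**
With `Δ = √(Δ₀² + x² + y² + z²)` and `D = √(Δ² + y² + z²)`, whenever
`x² + y² + z² ≤ r²`,
`k_ξ x²/√(1+x²) + y²/D + z²/D ≥ min{k_ξ/√(1+r²), 1/√(Δ₀²+2r²)} · (x²+y²+z²)`. -/
theorem path_following_quadratic_lower_bound (Δ₀ kξ r x y z : ℝ)
    (hΔ₀ : 0 < Δ₀) (hkξ : 0 < kξ) (hr : 0 < r)
    (hball : x ^ 2 + y ^ 2 + z ^ 2 ≤ r ^ 2) :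
    let Δ : ℝ := Real.sqrt (Δ₀ ^ 2 + x ^ 2 + y ^ 2 + z ^ 2)
    let D : ℝ := Real.sqrt (Δ ^ 2 + y ^ 2 + z ^ 2)
    kξ * x ^ 2 / Real.sqrt (1 + x ^ 2) + y ^ 2 / D + z ^ 2 / D ≥
      min (kξ / Real.sqrt (1 + r ^ 2)) (1 / Real.sqrt (Δ₀ ^ 2 + 2 * r ^ 2)) *
        (x ^ 2 + y ^ 2 + z ^ 2) := by
  intro Δ D
  have hx2 : (0:ℝ) ≤ x ^ 2 := sq_nonneg x
  have hy2 : (0:ℝ) ≤ y ^ 2 := sq_nonneg y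
  have hz2 : (0:ℝ) ≤ z ^ 2 := sq_nonneg z
  have hΔsq : Δ ^ 2 = Δ₀ ^ 2 + x ^ 2 + y ^ 2 + z ^ 2 := by
    simpa [Δ] using Real.sq_sqrt (by positivity : (0:ℝ) ≤ Δ₀ ^ 2 + x ^ 2 + y ^ 2 + z ^ 2)
  have hDarg : (0:ℝ) < Δ ^ 2 + y ^ 2 + z ^ 2 := by rw [hΔsq]; positivity
  have hD : 0 < D := Real.sqrt_pos.mpr hDarg
  have hDle : D ≤ Real.sqrt (Δ₀ ^ 2 + 2 * r ^ 2) := by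
    apply Real.sqrt_le_sqrt
    rw [hΔsq]; nlinarith
  have hsx : Real.sqrt (1 + x ^ 2) ≤ Real.sqrt (1 + r ^ 2) := by
    apply Real.sqrt_le_sqrt; nlinarith
  have hsxpos : (0:ℝ) < Real.sqrt (1 + x ^ 2) := Real.sqrt_pos.mpr (by positivity)
  have hsrpos : (0:ℝ) < Real.sqrt (1 + r ^ 2) := Real.sqrt_pos.mpr (by positivity)
  have hspos : (0:ℝ) < Real.sqrt (Δ₀ ^ 2 + 2 * r ^ 2) := Real.sqrt_pos.mpr (by positivity)
  set m := min (kξ / Real.sqrt (1 + r ^ 2)) (1 / Real.sqrt (Δ₀ ^ 2 + 2 * r ^ 2)) with hm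
  have h1 : m * x ^ 2 ≤ kξ * x ^ 2 / Real.sqrt (1 + x ^ 2) := by
    have : m ≤ kξ / Real.sqrt (1 + x ^ 2) := by
      refine le_trans (min_le_left _ _) ?_
      exact div_le_div_of_nonneg_left hkξ.le hsxpos hsx
    calc m * x ^ 2 ≤ kξ / Real.sqrt (1 + x ^ 2) * x ^ 2 :=
          mul_le_mul_of_nonneg_right this hx2
      _ = kξ * x ^ 2 / Real.sqrt (1 + x ^ 2) := by ring
  have hmD : m ≤ 1 / D := by
    refine le_trans (min_le_right _ _) ?_
    exact div_le_div_of_nonneg_left one_pos.le hD hDle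
  have h2 : m * y ^ 2 ≤ y ^ 2 / D := by
    calc m * y ^ 2 ≤ 1 / D * y ^ 2 := mul_le_mul_of_nonneg_right hmD hy2
      _ = y ^ 2 / D := by ring
  have h3 : m * z ^ 2 ≤ z ^ 2 / D := by
    calc m * z ^ 2 ≤ 1 / D * z ^ 2 := mul_le_mul_of_nonneg_right hmD hz2
      _ = z ^ 2 / D := by ring
  have : m * (x ^ 2 + y ^ 2 + z ^ 2) = m * x ^ 2 + m * y ^ 2 + m * z ^ 2 := by ring
  rw [ge_iff_le, this]
  exact add_le_add (add_le_add h1 h2) h3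
end

section
/- Let n ≥ 1, m > 0, r > 0, and let Λ be an n×n real symmetric positive definite matrix with smallest eigenvalue λ_min and largest eigenvalue λ_max. Define sat : ℝⁿ → ℝⁿ by sat(x) = (tanh(‖x‖)/‖x‖)·x for x ≠ 0 and sat(0) = 0, and let x : ℝ → ℝⁿ be differentiable with x′(t) = −m·sat(Λ x(t)) for all t, and ‖x(0)‖ ≤ r. Then for all t ≥ 0, ‖x(t)‖ ≤ ‖x(0)‖ · exp(−k t), where k = m λ_min tanh(λ_max r)/(λ_max r). -/
open scoped Classical

open scoped RealInnerProductSpace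

lemma aux_hasDerivAt_tanh (u : ℝ) :
    HasDerivAt Real.tanh (1 / Real.cosh u ^ 2) u := by
  have h := (Real.hasDerivAt_sinh u).div (Real.hasDerivAt_cosh u) (Real.cosh_pos u).ne'
  have heq : (Real.cosh u * Real.cosh u - Real.sinh u * Real.sinh u) / Real.cosh u ^ 2
      = 1 / Real.cosh u ^ 2 := by
    rw [show Real.cosh u * Real.cosh u - Real.sinh u * Real.sinh u
        = Real.cosh u ^ 2 - Real.sinh u ^ 2 by ring, Real.cosh_sq_sub_sinh_sq]
  rw [heq] at h
  exact h.congr_of_eventuallyEq (Filter.Eventually.of_forall fun y =>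
    (Real.tanh_eq_sinh_div_cosh y))

lemma aux_tanh_pos {u : ℝ} (hu : 0 < u) : 0 < Real.tanh u := by
  rw [Real.tanh_eq_sinh_div_cosh]
  exact div_pos (by rwa [Real.sinh_pos_iff]) (Real.cosh_pos u)

lemma aux_tanh_div_anti {s S : ℝ} (hs : 0 < s) (hsS : s ≤ S) :
    Real.tanh S / S ≤ Real.tanh s / s := by
  have hderiv : ∀ u : ℝ, u ≠ 0 → HasDerivAt (fun v => Real.tanh v / v)
      ((1 / Real.cosh u ^ 2 * u - Real.tanh u * 1) / u ^ 2) u := fun u hu =>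
    (aux_hasDerivAt_tanh u).div (hasDerivAt_id u) hu
  have key : AntitoneOn (fun v => Real.tanh v / v) (Set.Ioi 0) := by
    apply antitoneOn_of_deriv_nonpos (convex_Ioi 0)
    · intro u hu
      exact ((hderiv u (ne_of_gt hu)).continuousAt).continuousWithinAt
    · intro u hu
      rw [interior_Ioi] at hu
      exact (hderiv u (ne_of_gt hu)).differentiableAt.differentiableWithinAt
    · intro u hu
      rw [interior_Ioi] at hu
      rw [(hderiv u (ne_of_gt hu)).deriv]
      apply div_nonpos_of_nonpos_of_nonneg _ (sq_nonneg u)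
      have hsinh : u ≤ Real.sinh u * Real.cosh u := by
        have hu0 : 0 < u := Set.mem_Ioi.mp hu
        have h2 : 2 * u < Real.sinh (2 * u) := Real.self_lt_sinh_iff.mpr (by linarith)
        rw [Real.sinh_two_mul] at h2
        linarith
      have hc := Real.cosh_pos u
      have hc2 : (0 : ℝ) < Real.cosh u ^ 2 := by positivity
      have heq : 1 / Real.cosh u ^ 2 * u - Real.tanh u * 1
          = (u - Real.sinh u * Real.cosh u) / Real.cosh u ^ 2 := by
        rw [Real.tanh_eq_sinh_div_cosh]
        field_simp
      rw [heq]
      exact div_nonpos_of_nonpos_of_nonneg (by linarith) hc2.le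
  exact key (Set.mem_Ioi.2 hs) (Set.mem_Ioi.2 (lt_of_lt_of_le hs hsS)) hsS

lemma aux_le_of_sq_le_sq {a b : ℝ} (ha : 0 ≤ a) (hb : 0 ≤ b) (h : a ^ 2 ≤ b ^ 2) : a ≤ b := by
  calc a = Real.sqrt (a ^ 2) := (Real.sqrt_sq ha).symm
    _ ≤ Real.sqrt (b ^ 2) := Real.sqrt_le_sqrt h
    _ = b := Real.sqrt_sq hb

lemma aux_spectral (n : ℕ) (Λ : Matrix (Fin n) (Fin n) ℝ) (hΛ : Λ.IsHermitian)
    (lmin lmax : ℝ) (hlmax : 0 ≤ lmax)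
    (hmin_le : ∀ i, lmin ≤ hΛ.eigenvalues i)
    (hmax_ge : ∀ i, hΛ.eigenvalues i ≤ lmax)
    (hpos : ∀ i, 0 < hΛ.eigenvalues i)
    (v : EuclideanSpace ℝ (Fin n)) :
    lmin * ⟪v, v⟫ ≤ ⟪v, Matrix.toEuclideanLin Λ v⟫ ∧
      ‖Matrix.toEuclideanLin Λ v‖ ≤ lmax * ‖v‖ := by
  set T : EuclideanSpace ℝ (Fin n) →ₗ[ℝ] EuclideanSpace ℝ (Fin n) := Matrix.toEuclideanLin Λ with hT
  have hTapp : ∀ w : EuclideanSpace ℝ (Fin n), T w = (WithLp.toLp 2 (Λ.mulVec w) : EuclideanSpace ℝ (Fin n)) :=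
    fun w => rfl
  have hsym : T.IsSymmetric := Matrix.isHermitian_iff_isSymmetric.1 hΛ
  set e := hΛ.eigenvectorBasis with he
  set μ := hΛ.eigenvalues with hμ
  have hTe : ∀ j, T (e j) = μ j • (e j) := fun j => congrArg (WithLp.toLp 2) (hΛ.mulVec_eigenvectorBasis j)
  have hinner_e : ∀ (j : Fin n) (w : EuclideanSpace ℝ (Fin n)),
      ⟪e j, T w⟫ = μ j * ⟪e j, w⟫ := by
    intro j w
    rw [← hsym (e j) w, hTe j, real_inner_smul_left]
  have hsum2 : ⟪v, v⟫ = ∑ j, ⟪e j, v⟫ ^ 2 := by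
    rw [← e.sum_inner_mul_inner v v]
    exact Finset.sum_congr rfl fun j _ => by rw [real_inner_comm (e j) v]; ring
  constructor
  · rw [← e.sum_inner_mul_inner v (T v), hsum2, Finset.mul_sum]
    apply Finset.sum_le_sum
    intro j _
    rw [hinner_e, real_inner_comm (e j) v]
    calc lmin * ⟪e j, v⟫ ^ 2 ≤ μ j * ⟪e j, v⟫ ^ 2 :=
          mul_le_mul_of_nonneg_right (hmin_le j) (sq_nonneg _)
      _ = ⟪e j, v⟫ * (μ j * ⟪e j, v⟫) := by ring
  · have hTT : ⟪T v, T v⟫ ≤ lmax ^ 2 * ⟪v, v⟫ := by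
      rw [← e.sum_inner_mul_inner (T v) (T v), hsum2, Finset.mul_sum]
      apply Finset.sum_le_sum
      intro j _
      rw [real_inner_comm (e j) (T v), hinner_e]
      calc μ j * ⟪e j, v⟫ * (μ j * ⟪e j, v⟫) = μ j ^ 2 * ⟪e j, v⟫ ^ 2 := by ring
        _ ≤ lmax ^ 2 * ⟪e j, v⟫ ^ 2 :=
            mul_le_mul_of_nonneg_right (pow_le_pow_left₀ (hpos j).le (hmax_ge j) 2) (sq_nonneg _)
    have e1 : ⟪T v, T v⟫ = ‖T v‖ ^ 2 := real_inner_self_eq_norm_sq _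
    have e2 : ⟪v, v⟫ = ‖v‖ ^ 2 := real_inner_self_eq_norm_sq v
    rw [e1, e2] at hTT
    calc ‖T v‖
        = Real.sqrt (‖T v‖ ^ 2) :=
          (Real.sqrt_sq (norm_nonneg _)).symm
      _ ≤ Real.sqrt ((lmax * ‖v‖) ^ 2) := Real.sqrt_le_sqrt (by rw [mul_pow]; linarith)
      _ = lmax * ‖v‖ := Real.sqrt_sq (mul_nonneg hlmax (norm_nonneg _))


/-- **Uniform semiglobal exponential stability of the saturated formation-keeping dynamics.**
If `x′(t) = −m · sat(Λ x(t))` with `Λ` symmetric positive definite (smallest eigenvalue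
`λmin`, largest `λmax`) and `‖x(0)‖ ≤ r`, then `‖x(t)‖ ≤ ‖x(0)‖ e^{−kt}` for all `t ≥ 0`,
where `k = m λmin tanh(λmax r)/(λmax r)`. -/
theorem saturated_dynamics_exponential_decay (n : ℕ) (hn : 1 ≤ n) (m r : ℝ)
    (hm : 0 < m) (hr : 0 < r)
    (Λ : Matrix (Fin n) (Fin n) ℝ) (hΛ : Λ.IsHermitian) (hPD : Λ.PosDef)
    (lmin lmax : ℝ)
    (hmin : IsLeast (Set.range hΛ.eigenvalues) lmin)
    (hmax : IsGreatest (Set.range hΛ.eigenvalues) lmax)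
    (x : ℝ → EuclideanSpace ℝ (Fin n))
    (hx : ∀ t : ℝ, HasDerivAt x ((-m) • sat (WithLp.toLp 2 (Λ.mulVec (x t)) : EuclideanSpace ℝ (Fin n))) t)
    (hx0 : ‖x 0‖ ≤ r) :
    ∀ t : ℝ, 0 ≤ t →
      ‖x t‖ ≤ ‖x 0‖ * Real.exp (-(m * lmin * (Real.tanh (lmax * r) / (lmax * r))) * t) := by
  -- eigenvalue facts
  have hμpos : ∀ i, 0 < hΛ.eigenvalues i := fun i => hPD.eigenvalues_pos i
  have hmin_le : ∀ i, lmin ≤ hΛ.eigenvalues i := fun i => hmin.2 ⟨i, rfl⟩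
  have hmax_ge : ∀ i, hΛ.eigenvalues i ≤ lmax := fun i => hmax.2 ⟨i, rfl⟩
  obtain ⟨i0, hi0⟩ := hmin.1
  have hlmin : 0 < lmin := hi0 ▸ hμpos i0
  have hlmax : 0 < lmax := lt_of_lt_of_le hlmin (hmax.2 hmin.1)
  set K := m * lmin * (Real.tanh (lmax * r) / (lmax * r)) with hK
  have hLr : 0 < lmax * r := mul_pos hlmax hr
  have htanhLr := aux_tanh_pos hLr
  have hKpos : 0 < K := mul_pos (mul_pos hm hlmin) (div_pos htanhLr hLr)
  set T := Matrix.toEuclideanLin Λ with hT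
  have spec := fun v => aux_spectral n Λ hΛ lmin lmax hlmax.le hmin_le hmax_ge hμpos v
  -- the vector field and derivative of the squared norm
  have hxD : ∀ s : ℝ, HasDerivAt x ((-m) • sat (T (x s))) s := fun s => hx s
  have hgd : ∀ s : ℝ, HasDerivAt (fun u => ⟪x u, x u⟫)
      (2 * ⟪x s, (-m) • sat (T (x s))⟫) s := by
    intro s
    have h := HasDerivAt.inner ℝ (hxD s) (hxD s)
    have heq : ⟪x s, (-m) • sat (T (x s))⟫ + ⟪(-m) • sat (T (x s)), x s⟫
        = 2 * ⟪x s, (-m) • sat (T (x s))⟫ := by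
      rw [real_inner_comm (x s) ((-m) • sat (T (x s)))]; ring
    rw [heq] at h
    exact h
  have hgnn : ∀ s : ℝ, (0:ℝ) ≤ ⟪x s, x s⟫ := fun s => real_inner_self_nonneg
  have hP : ∀ s : ℝ, lmin * ⟪x s, x s⟫ ≤ ⟪x s, T (x s)⟫ := fun s => (spec (x s)).1
  have hPnn : ∀ s : ℝ, (0:ℝ) ≤ ⟪x s, T (x s)⟫ := fun s =>
    le_trans (mul_nonneg hlmin.le (hgnn s)) (hP s)
  -- nonvanishing of T (x s) when x s ≠ 0
  have hTne : ∀ s : ℝ, x s ≠ 0 → T (x s) ≠ 0 := by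
    intro s hxs h0
    have hdp := hPD.dotProduct_mulVec_pos (x := (x s).ofLp) (fun h => hxs (by simpa using congrArg (WithLp.toLp 2) h))
    have h0' : Λ.mulVec (x s).ofLp = (0 : Fin n → ℝ) := congrArg WithLp.ofLp h0
    rw [h0', dotProduct_zero] at hdp
    exact lt_irrefl 0 hdp
  -- the inner product with the vector field
  have hinnerD : ∀ s : ℝ, x s ≠ 0 →
      ⟪x s, (-m) • sat (T (x s))⟫
        = -m * ((Real.tanh ‖T (x s)‖ / ‖T (x s)‖) * ⟪x s, T (x s)⟫) := by
    intro s hxs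
    rw [real_inner_smul_right, sat, if_neg (hTne s hxs), real_inner_smul_right]
  -- the derivative of the squared norm is nonpositive
  have hGnonpos : ∀ s : ℝ, 2 * ⟪x s, (-m) • sat (T (x s))⟫ ≤ 0 := by
    intro s
    by_cases hxs : x s = 0
    · rw [hxs]; simp
    · rw [hinnerD s hxs]
      have hwpos : 0 < ‖T (x s)‖ := norm_pos_iff.mpr (hTne s hxs)
      have hc : 0 ≤ Real.tanh ‖T (x s)‖ / ‖T (x s)‖ :=
        div_nonneg (aux_tanh_pos hwpos).le hwpos.le
      nlinarith [mul_nonneg hc (hPnn s)]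
  -- the solution stays in the ball of radius r for nonnegative times
  have hganti : Antitone (fun u => ⟪x u, x u⟫) :=
    antitone_of_deriv_nonpos (fun s => (hgd s).differentiableAt)
      (fun s => by rw [(hgd s).deriv]; exact hGnonpos s)
  have hnorm_mono : ∀ s : ℝ, 0 ≤ s → ‖x s‖ ≤ ‖x 0‖ := by
    intro s hs
    have h := hganti hs
    simp only [real_inner_self_eq_norm_sq] at h
    exact aux_le_of_sq_le_sq (norm_nonneg _) (norm_nonneg _) h
  have hnorm_le_r : ∀ s : ℝ, 0 ≤ s → ‖x s‖ ≤ r := fun s hs =>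
    le_trans (hnorm_mono s hs) hx0
  -- the decay estimate for the derivative in the ball
  have hGdecay : ∀ s : ℝ, ‖x s‖ ≤ r →
      2 * ⟪x s, (-m) • sat (T (x s))⟫ ≤ -(2 * K) * ⟪x s, x s⟫ := by
    intro s hsr
    by_cases hxs : x s = 0
    · rw [hxs]; simp
    · rw [hinnerD s hxs]
      have hwpos : 0 < ‖T (x s)‖ := norm_pos_iff.mpr (hTne s hxs)
      have hwle : ‖T (x s)‖ ≤ lmax * r :=
        le_trans (spec (x s)).2 (mul_le_mul_of_nonneg_left hsr hlmax.le)
      have hcge : Real.tanh (lmax * r) / (lmax * r)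
          ≤ Real.tanh ‖T (x s)‖ / ‖T (x s)‖ := aux_tanh_div_anti hwpos hwle
      have h1 : (Real.tanh (lmax * r) / (lmax * r)) * (lmin * ⟪x s, x s⟫)
          ≤ (Real.tanh ‖T (x s)‖ / ‖T (x s)‖) * ⟪x s, T (x s)⟫ :=
        mul_le_mul hcge (hP s) (mul_nonneg hlmin.le (hgnn s))
          (div_nonneg (aux_tanh_pos hwpos).le hwpos.le)
      have h2 := mul_le_mul_of_nonneg_left h1 hm.le
      rw [hK]
      nlinarith [h2]
  -- the Lyapunov-type function with exponential weight
  have hexp : ∀ s : ℝ, HasDerivAt (fun u : ℝ => Real.exp (2 * K * u))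
      (Real.exp (2 * K * s) * (2 * K)) s := by
    intro s
    simpa using (((hasDerivAt_id s).const_mul (2 * K)).exp)
  have hhd : ∀ s : ℝ, HasDerivAt (fun u => ⟪x u, x u⟫ * Real.exp (2 * K * u))
      (2 * ⟪x s, (-m) • sat (T (x s))⟫ * Real.exp (2 * K * s)
        + ⟪x s, x s⟫ * (Real.exp (2 * K * s) * (2 * K))) s :=
    fun s => (hgd s).mul (hexp s)
  have hanti2 : AntitoneOn (fun u => ⟪x u, x u⟫ * Real.exp (2 * K * u)) (Set.Ici 0) := by
    apply antitoneOn_of_deriv_nonpos (convex_Ici 0)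
    · exact fun s _ => (hhd s).continuousAt.continuousWithinAt
    · intro s hs
      exact (hhd s).differentiableAt.differentiableWithinAt
    · intro s hs
      rw [interior_Ici] at hs
      have hs0 : (0:ℝ) < s := hs
      rw [(hhd s).deriv]
      have hb := hGdecay s (hnorm_le_r s hs0.le)
      nlinarith [mul_le_mul_of_nonneg_right hb (Real.exp_nonneg (2 * K * s))]
  -- conclusion
  intro t ht
  have hht := hanti2 Set.self_mem_Ici (Set.mem_Ici.2 ht) ht
  have hgt : ⟪x t, x t⟫ * Real.exp (2 * K * t) ≤ ⟪x 0, x 0⟫ := by simpa using hht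
  have hdecay : ⟪x t, x t⟫ ≤ ⟪x 0, x 0⟫ * Real.exp (-(2 * K * t)) := by
    calc ⟪x t, x t⟫
        = ⟪x t, x t⟫ * Real.exp (2 * K * t) * Real.exp (-(2 * K * t)) := by
          rw [mul_assoc, ← Real.exp_add]; simp
      _ ≤ ⟪x 0, x 0⟫ * Real.exp (-(2 * K * t)) :=
          mul_le_mul_of_nonneg_right hgt (Real.exp_nonneg _)
  apply aux_le_of_sq_le_sq (norm_nonneg _)
    (mul_nonneg (norm_nonneg _) (Real.exp_nonneg _))
  rw [mul_pow, ← real_inner_self_eq_norm_sq, ← real_inner_self_eq_norm_sq]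
  have hexp2 : Real.exp (-K * t) ^ 2 = Real.exp (-(2 * K * t)) := by
    rw [pow_two, ← Real.exp_add]; congr 1; ring
  rw [hexp2]
  exact hdecay
end

section
/- Let p, v ∈ ℝ² with v ≠ 0, let ρ ∈ ℝ satisfy 0 < ρ < ‖p‖, and set α = arcsin(ρ/‖p‖). If the angle between p and v is strictly greater than α, then for all t ≥ 0 one has ‖p − t·v‖ > ρ. -/
/-- **Collision-cone safety property.**
For `p, v ∈ ℝ²` with `v ≠ 0`, `0 < ρ < ‖p‖` and `α = arcsin(ρ/‖p‖)`: if the angle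
between `p` and `v` is strictly greater than `α`, then `‖p − t·v‖ > ρ` for all `t ≥ 0`. -/
theorem collision_cone_safety (p v : EuclideanSpace ℝ (Fin 2)) (ρ : ℝ)
    (hv : v ≠ 0) (hρ : 0 < ρ) (hρp : ρ < ‖p‖)
    (hangle : Real.arcsin (ρ / ‖p‖) < InnerProductGeometry.angle p v) :
    ∀ t : ℝ, 0 ≤ t → ρ < ‖p - t • v‖ := by
  intro t ht
  have hp0 : (0:ℝ) < ‖p‖ := lt_trans hρ hρp
  have hv0 : (0:ℝ) < ‖v‖ := norm_pos_iff.mpr hv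
  set θ := InnerProductGeometry.angle p v with hθ
  set i := (inner ℝ p v : ℝ) with hi
  have hcos : Real.cos θ = i / (‖p‖ * ‖v‖) := InnerProductGeometry.cos_angle p v
  have hsin_nonneg : 0 ≤ Real.sin θ := Real.sin_nonneg_of_nonneg_of_le_pi
    (InnerProductGeometry.angle_nonneg p v) (InnerProductGeometry.angle_le_pi p v)
  have hsc : Real.sin θ ^ 2 + Real.cos θ ^ 2 = 1 := Real.sin_sq_add_cos_sq θ
  have hsq : ‖p - t • v‖ ^ 2 = ‖p‖ ^ 2 - 2 * t * i + t ^ 2 * ‖v‖ ^ 2 := by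
    rw [norm_sub_sq_real, inner_smul_right, norm_smul]
    simp [abs_of_nonneg ht, hi]
    ring
  have key : ρ ^ 2 < ‖p - t • v‖ ^ 2 := by
    rcases le_or_gt i 0 with hile | hipos
    · have : ‖p‖ ^ 2 ≤ ‖p - t • v‖ ^ 2 := by nlinarith
      nlinarith
    · -- cos θ > 0, so θ < π/2
      have hcospos : 0 < Real.cos θ := by
        rw [hcos]; exact div_pos hipos (by positivity)
      have hθlt : θ < Real.pi / 2 := by
        by_contra hle
        push_neg at hle
        have := Real.cos_nonpos_of_pi_div_two_le_of_le hle
          (le_trans (InnerProductGeometry.angle_le_pi p v) (by linarith [Real.pi_pos]))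
        linarith
      have hα : Real.arcsin (ρ / ‖p‖) < θ := hangle
      have hratio : ρ / ‖p‖ ≤ 1 := by
        rw [div_le_one hp0]; linarith
      have hsinα : Real.sin (Real.arcsin (ρ / ‖p‖)) = ρ / ‖p‖ :=
        Real.sin_arcsin (by nlinarith [div_pos hρ hp0]) hratio
      have hsinlt : ρ / ‖p‖ < Real.sin θ := by
        rw [← hsinα]
        apply Real.strictMonoOn_sin ⟨Real.neg_pi_div_two_le_arcsin _, Real.arcsin_le_pi_div_two _⟩
          ⟨by linarith [Real.pi_pos, InnerProductGeometry.angle_nonneg p v], le_of_lt hθlt⟩ hα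
      have hρsin : ρ < ‖p‖ * Real.sin θ := by
        rw [div_lt_iff₀ hp0] at hsinlt; linarith
      -- ‖p‖² sin²θ = ‖p‖² - i²/‖v‖²
      have hid : i = Real.cos θ * (‖p‖ * ‖v‖) := by
        rw [hcos]; field_simp
      have hmin : ‖p‖ ^ 2 * Real.sin θ ^ 2 ≤ ‖p - t • v‖ ^ 2 := by
        rw [hsq, hid]
        have h1 : 0 ≤ (t * ‖v‖ - Real.cos θ * ‖p‖) ^ 2 := sq_nonneg _
        nlinarith
      nlinarith
  nlinarith [norm_nonneg (p - t • v)]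
end
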